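/- arXiv:1206.3157 — 4 statements merged into one kernel-verified Lean document; each statement's English description precedes it below -/
import Mathlib

section
/- For α, β > 0 and any fixed t ∈ ℝ, the mKdV breather B_{α,β}(t,x) = 2√2 ∂_x [arctan((β/α) sin(α(x+δt)) / cosh(β(x+γt)))], with δ = α²−3β², γ = 3α²−β², satisfies (1/2)∫_ℝ B_{α,β}(t,x)² dx = 4β. -/
open Real MeasureTheory Filter Topology Set

noncomputable def breather (α β t x : ℝ) : ℝ :=
  2 * Real.sqrt 2 *
    deriv (fun x' : ℝ =>
      Real.arctan ((β / α) * Real.sin (α * (x' + (α ^ 2 - 3 * β ^ 2) * t)) /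
        Real.cosh (β * (x' + (3 * α ^ 2 - β ^ 2) * t)))) x

namespace BreatherMassAux

noncomputable def sn (α β t x : ℝ) : ℝ := Real.sin (α * (x + (α ^ 2 - 3 * β ^ 2) * t))
noncomputable def cs (α β t x : ℝ) : ℝ := Real.cos (α * (x + (α ^ 2 - 3 * β ^ 2) * t))
noncomputable def ch (α β t x : ℝ) : ℝ := Real.cosh (β * (x + (3 * α ^ 2 - β ^ 2) * t))
noncomputable def sh (α β t x : ℝ) : ℝ := Real.sinh (β * (x + (3 * α ^ 2 - β ^ 2) * t))
noncomputable def DD (α β t x : ℝ) : ℝ := ch α β t x ^ 2 + (β / α) ^ 2 * sn α β t x ^ 2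
noncomputable def BB (α β t x : ℝ) : ℝ :=
  2 * Real.sqrt 2 *
    ((β * cs α β t x * ch α β t x - β ^ 2 / α * sn α β t x * sh α β t x) / DD α β t x)
noncomputable def GG (α β t x : ℝ) : ℝ :=
  (4 * β * (ch α β t x * sh α β t x) + 4 * β ^ 2 / α * (sn α β t x * cs α β t x)) / DD α β t x

variable {α β t : ℝ}

lemma ch_pos (x : ℝ) : 0 < ch α β t x := Real.cosh_pos _
lemma one_le_ch (x : ℝ) : 1 ≤ ch α β t x := Real.one_le_cosh _

lemma DD_pos (x : ℝ) : 0 < DD α β t x := by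
  have h := ch_pos (α := α) (β := β) (t := t) x
  have h2 : (0:ℝ) ≤ (β / α) ^ 2 * sn α β t x ^ 2 := by positivity
  unfold DD; nlinarith

lemma sc_sq (x : ℝ) : sn α β t x ^ 2 + cs α β t x ^ 2 = 1 := Real.sin_sq_add_cos_sq _
lemma CS_sq (x : ℝ) : ch α β t x ^ 2 - sh α β t x ^ 2 = 1 := Real.cosh_sq_sub_sinh_sq _

lemma hasDerivAt_lin1 (x : ℝ) :
    HasDerivAt (fun x' : ℝ => α * (x' + (α ^ 2 - 3 * β ^ 2) * t)) α x := by
  simpa using ((hasDerivAt_id x).add_const ((α ^ 2 - 3 * β ^ 2) * t)).const_mul α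

lemma hasDerivAt_lin2 (x : ℝ) :
    HasDerivAt (fun x' : ℝ => β * (x' + (3 * α ^ 2 - β ^ 2) * t)) β x := by
  simpa using ((hasDerivAt_id x).add_const ((3 * α ^ 2 - β ^ 2) * t)).const_mul β

lemma hasDerivAt_sn (x : ℝ) : HasDerivAt (sn α β t) (α * cs α β t x) x := by
  have h := (Real.hasDerivAt_sin (α * (x + (α ^ 2 - 3 * β ^ 2) * t))).comp x (hasDerivAt_lin1 x)
  rw [mul_comm (Real.cos (α * (x + (α ^ 2 - 3 * β ^ 2) * t))) α] at h
  exact h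

lemma hasDerivAt_cs (x : ℝ) : HasDerivAt (cs α β t) (-(α * sn α β t x)) x := by
  have h := (Real.hasDerivAt_cos (α * (x + (α ^ 2 - 3 * β ^ 2) * t))).comp x (hasDerivAt_lin1 x)
  rw [show -Real.sin (α * (x + (α ^ 2 - 3 * β ^ 2) * t)) * α = -(α * sn α β t x) by unfold sn; ring] at h
  exact h

lemma hasDerivAt_ch (x : ℝ) : HasDerivAt (ch α β t) (β * sh α β t x) x := by
  have h := (Real.hasDerivAt_cosh (β * (x + (3 * α ^ 2 - β ^ 2) * t))).comp x (hasDerivAt_lin2 x)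
  rw [mul_comm (Real.sinh (β * (x + (3 * α ^ 2 - β ^ 2) * t))) β] at h
  exact h

lemma hasDerivAt_sh (x : ℝ) : HasDerivAt (sh α β t) (β * ch α β t x) x := by
  have h := (Real.hasDerivAt_sinh (β * (x + (3 * α ^ 2 - β ^ 2) * t))).comp x (hasDerivAt_lin2 x)
  rw [mul_comm (Real.cosh (β * (x + (3 * α ^ 2 - β ^ 2) * t))) β] at h
  exact h

lemma breather_eq (hα : 0 < α) (x : ℝ) : breather α β t x = BB α β t x := by
  have hch : ch α β t x ≠ 0 := (ch_pos x).ne'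
  have hDD : DD α β t x ≠ 0 := (DD_pos x).ne'
  have hg : HasDerivAt
      (fun x' : ℝ => (β / α) * Real.sin (α * (x' + (α ^ 2 - 3 * β ^ 2) * t)) /
        Real.cosh (β * (x' + (3 * α ^ 2 - β ^ 2) * t)))
      (((β / α) * (α * cs α β t x) * ch α β t x -
        (β / α) * sn α β t x * (β * sh α β t x)) / ch α β t x ^ 2) x :=
    ((hasDerivAt_sn x).const_mul (β / α)).div (hasDerivAt_ch x) hch
  have harc := (Real.hasDerivAt_arctan ((β / α) * sn α β t x / ch α β t x)).comp x hg
  have hderiv : deriv (fun x' : ℝ =>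
      Real.arctan ((β / α) * Real.sin (α * (x' + (α ^ 2 - 3 * β ^ 2) * t)) /
        Real.cosh (β * (x' + (3 * α ^ 2 - β ^ 2) * t)))) x =
      1 / (1 + ((β / α) * sn α β t x / ch α β t x) ^ 2) *
        (((β / α) * (α * cs α β t x) * ch α β t x -
          (β / α) * sn α β t x * (β * sh α β t x)) / ch α β t x ^ 2) :=
    HasDerivAt.deriv (by simpa [sn, ch, Function.comp_def] using harc)
  have hg2 : 1 + ((β / α) * sn α β t x / ch α β t x) ^ 2 ≠ 0 := by positivity
  unfold breather BB
  rw [hderiv, mul_eq_mul_left_iff]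
  left
  unfold DD
  field_simp

lemma key_identity (hα : α ≠ 0) (s c C S : ℝ) (hs : s ^ 2 + c ^ 2 = 1)
    (hC : C ^ 2 - S ^ 2 = 1) :
    (4 * β * (β * S * S + C * (β * C)) + 4 * β ^ 2 / α * (α * c * c + s * -(α * s))) *
        (C ^ 2 + (β / α) ^ 2 * s ^ 2) -
      (4 * β * (C * S) + 4 * β ^ 2 / α * (s * c)) *
        (2 * C ^ 1 * (β * S) + (β / α) ^ 2 * (2 * s ^ 1 * (α * c))) =
      8 * (β * c * C - β ^ 2 / α * s * S) ^ 2 := by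
  have h1 : c ^ 2 = 1 - s ^ 2 := by linarith
  have h2 : S ^ 2 = C ^ 2 - 1 := by linarith
  field_simp
  linear_combination (4 * β ^ 2 * (α ^ 2 * C ^ 2 + β ^ 2 * s ^ 2)) * hC -
    (4 * β ^ 2 * (α ^ 2 * C ^ 2 + β ^ 2 * s ^ 2)) * hs

lemma hasDerivAt_GG (hα : 0 < α) (x : ℝ) :
    HasDerivAt (GG α β t) (BB α β t x ^ 2) x := by
  have hDD : DD α β t x ≠ 0 := (DD_pos x).ne'
  have hnum : HasDerivAt (fun y => 4 * β * (ch α β t y * sh α β t y) +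
      4 * β ^ 2 / α * (sn α β t y * cs α β t y))
      (4 * β * (β * sh α β t x * sh α β t x + ch α β t x * (β * ch α β t x)) +
        4 * β ^ 2 / α * (α * cs α β t x * cs α β t x + sn α β t x * -(α * sn α β t x))) x :=
    (((hasDerivAt_ch x).mul (hasDerivAt_sh x)).const_mul (4 * β)).add
      (((hasDerivAt_sn x).mul (hasDerivAt_cs x)).const_mul (4 * β ^ 2 / α))
  have hch2 : HasDerivAt (fun y => ch α β t y ^ 2)
      (2 * ch α β t x ^ 1 * (β * sh α β t x)) x := by
    simpa using (hasDerivAt_ch (α := α) (β := β) (t := t) x).fun_pow 2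
  have hsn2 : HasDerivAt (fun y => (β / α) ^ 2 * sn α β t y ^ 2)
      ((β / α) ^ 2 * (2 * sn α β t x ^ 1 * (α * cs α β t x))) x := by
    have := ((hasDerivAt_sn (α := α) (β := β) (t := t) x).pow 2).const_mul ((β / α) ^ 2)
    simpa using this
  have hden : HasDerivAt (DD α β t)
      (2 * ch α β t x ^ 1 * (β * sh α β t x) +
        (β / α) ^ 2 * (2 * sn α β t x ^ 1 * (α * cs α β t x))) x := hch2.add hsn2
  have hdiv := hnum.div hden hDD
  have hkey := key_identity (β := β) hα.ne' (sn α β t x) (cs α β t x) (ch α β t x)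
    (sh α β t x) (sc_sq x) (CS_sq x)
  have h8 : ((4 * β * (β * sh α β t x * sh α β t x + ch α β t x * (β * ch α β t x)) +
        4 * β ^ 2 / α * (α * cs α β t x * cs α β t x + sn α β t x * -(α * sn α β t x))) *
          DD α β t x -
        (4 * β * (ch α β t x * sh α β t x) + 4 * β ^ 2 / α * (sn α β t x * cs α β t x)) *
          (2 * ch α β t x ^ 1 * (β * sh α β t x) +
            (β / α) ^ 2 * (2 * sn α β t x ^ 1 * (α * cs α β t x)))) / DD α β t x ^ 2 =
      BB α β t x ^ 2 := by
    have hsq : (2 * Real.sqrt 2) ^ 2 = 8 := by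
      rw [mul_pow, Real.sq_sqrt (by norm_num : (0:ℝ) ≤ 2)]; norm_num
    unfold BB DD at *
    rw [mul_pow, hsq]
    rw [div_pow (β * cs α β t x * ch α β t x - β ^ 2 / α * sn α β t x * sh α β t x),
      ← mul_div_assoc]
    exact congrArg (fun z => z / (ch α β t x ^ 2 + (β / α) ^ 2 * sn α β t x ^ 2) ^ 2)
      (by linear_combination hkey)
  exact h8 ▸ hdiv


lemma GG_eq (hα : 0 < α) (x : ℝ) :
    GG α β t x = (4 * β * (sh α β t x / ch α β t x) +
        4 * β ^ 2 / α * (sn α β t x * cs α β t x / ch α β t x ^ 2)) /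
      (1 + (β / α) ^ 2 * (sn α β t x ^ 2 / ch α β t x ^ 2)) := by
  have hch : ch α β t x ≠ 0 := (ch_pos x).ne'
  have hDD : DD α β t x ≠ 0 := (DD_pos x).ne'
  unfold GG
  unfold DD at hDD ⊢
  rw [div_eq_div_iff hDD (by positivity)]
  field_simp

lemma tendsto_u_top (hβ : 0 < β) :
    Tendsto (fun x : ℝ => β * (x + (3 * α ^ 2 - β ^ 2) * t)) atTop atTop := by
  apply Tendsto.const_mul_atTop hβ
  exact tendsto_atTop_add_const_right atTop _ tendsto_id

lemma tendsto_u_bot (hβ : 0 < β) :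
    Tendsto (fun x : ℝ => β * (x + (3 * α ^ 2 - β ^ 2) * t)) atBot atBot := by
  apply Tendsto.const_mul_atBot hβ
  exact tendsto_atBot_add_const_right atBot _ tendsto_id

lemma tendsto_ch_top (hβ : 0 < β) : Tendsto (fun x => ch α β t x) atTop atTop := by
  apply tendsto_atTop_mono (fun x => ?_)
    ((Real.tendsto_exp_atTop.comp (tendsto_u_top (α := α) (t := t) hβ)).atTop_div_const
      (by norm_num : (0:ℝ) < 2))
  unfold ch
  rw [Real.cosh_eq]
  have := Real.exp_pos (-(β * (x + (3 * α ^ 2 - β ^ 2) * t)))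
  simp only [Function.comp]
  linarith

lemma tendsto_ch_bot (hβ : 0 < β) : Tendsto (fun x => ch α β t x) atBot atTop := by
  apply tendsto_atTop_mono (fun x => ?_)
    ((Real.tendsto_exp_atTop.comp
      (tendsto_neg_atBot_atTop.comp (tendsto_u_bot (α := α) (t := t) hβ))).atTop_div_const
      (by norm_num : (0:ℝ) < 2))
  simp only [Function.comp]
  unfold ch
  rw [Real.cosh_eq]
  have := Real.exp_pos (β * (x + (3 * α ^ 2 - β ^ 2) * t))
  linarith

lemma tendsto_inv_ch_sq {l : Filter ℝ} (h : Tendsto (fun x => ch α β t x) l atTop) :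
    Tendsto (fun x => (ch α β t x ^ 2)⁻¹) l (𝓝 0) :=
  (tendsto_atTop_mono (fun x => le_self_pow₀ (one_le_ch x) two_ne_zero) h).inv_tendsto_atTop

lemma tendsto_sncs {l : Filter ℝ} (h : Tendsto (fun x => ch α β t x) l atTop) :
    Tendsto (fun x => sn α β t x * cs α β t x / ch α β t x ^ 2) l (𝓝 0) := by
  refine squeeze_zero_norm (fun x => ?_) (tendsto_inv_ch_sq h)
  have h1 : |sn α β t x| ≤ 1 := Real.abs_sin_le_one _
  have h2 : |cs α β t x| ≤ 1 := Real.abs_cos_le_one _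
  have h3 : (0:ℝ) < ch α β t x ^ 2 := pow_pos (ch_pos x) 2
  rw [Real.norm_eq_abs, abs_div, abs_mul, abs_of_pos h3, div_le_iff₀ h3,
    inv_mul_cancel₀ h3.ne']
  calc |sn α β t x| * |cs α β t x| ≤ 1 * 1 :=
        mul_le_mul h1 h2 (abs_nonneg _) zero_le_one
    _ = 1 := by norm_num

lemma tendsto_snsq {l : Filter ℝ} (h : Tendsto (fun x => ch α β t x) l atTop) :
    Tendsto (fun x => sn α β t x ^ 2 / ch α β t x ^ 2) l (𝓝 0) := by
  refine squeeze_zero_norm (fun x => ?_) (tendsto_inv_ch_sq h)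
  have h1 : sn α β t x ^ 2 ≤ 1 := by
    have h' : sn α β t x ^ 2 ≤ 1 ^ 2 := by
      rw [← sq_abs]
      exact pow_le_pow_left₀ (abs_nonneg _) (Real.abs_sin_le_one _) 2
    simpa using h'
  have h3 : (0:ℝ) < ch α β t x ^ 2 := pow_pos (ch_pos x) 2
  rw [Real.norm_eq_abs, abs_div, abs_of_pos h3, abs_of_nonneg (sq_nonneg _),
    div_le_iff₀ h3, inv_mul_cancel₀ h3.ne']
  exact h1

lemma tendsto_tanh_top (hβ : 0 < β) :
    Tendsto (fun x => sh α β t x / ch α β t x) atTop (𝓝 1) := by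
  have heq : ∀ x, sh α β t x / ch α β t x =
      1 - Real.exp (-(β * (x + (3 * α ^ 2 - β ^ 2) * t))) / ch α β t x := by
    intro x
    have hch : ch α β t x ≠ 0 := (ch_pos x).ne'
    have h := Real.cosh_sub_sinh (β * (x + (3 * α ^ 2 - β ^ 2) * t))
    unfold ch sh at *
    field_simp
    linarith
  simp only [heq]
  have hb : Tendsto (fun x : ℝ => Real.exp (-(β * (x + (3 * α ^ 2 - β ^ 2) * t))))
      atTop (𝓝 0) := by
    have := Real.tendsto_exp_atBot.comp
      (tendsto_neg_atTop_atBot.comp (tendsto_u_top (α := α) (t := t) hβ))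
    simpa [Function.comp_def] using this
  have h0 : Tendsto (fun x => Real.exp (-(β * (x + (3 * α ^ 2 - β ^ 2) * t))) / ch α β t x)
      atTop (𝓝 0) := by
    refine squeeze_zero_norm (fun x => ?_) hb
    have hch := ch_pos (α := α) (β := β) (t := t) x
    have hexp := Real.exp_pos (-(β * (x + (3 * α ^ 2 - β ^ 2) * t)))
    rw [Real.norm_eq_abs, abs_div, abs_of_pos hexp, abs_of_pos hch, div_le_iff₀ hch]
    nlinarith [one_le_ch (α := α) (β := β) (t := t) x]
  simpa using tendsto_const_nhds.sub h0

lemma tendsto_tanh_bot (hβ : 0 < β) :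
    Tendsto (fun x => sh α β t x / ch α β t x) atBot (𝓝 (-1)) := by
  have heq : ∀ x, sh α β t x / ch α β t x =
      Real.exp (β * (x + (3 * α ^ 2 - β ^ 2) * t)) / ch α β t x - 1 := by
    intro x
    have hch : ch α β t x ≠ 0 := (ch_pos x).ne'
    have h := Real.sinh_add_cosh (β * (x + (3 * α ^ 2 - β ^ 2) * t))
    unfold ch sh at *
    field_simp
    all_goals linarith
  simp only [heq]
  have hb : Tendsto (fun x : ℝ => Real.exp (β * (x + (3 * α ^ 2 - β ^ 2) * t)))
      atBot (𝓝 0) := by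
    have := Real.tendsto_exp_atBot.comp (tendsto_u_bot (α := α) (t := t) hβ)
    simpa [Function.comp_def] using this
  have h0 : Tendsto (fun x => Real.exp (β * (x + (3 * α ^ 2 - β ^ 2) * t)) / ch α β t x)
      atBot (𝓝 0) := by
    refine squeeze_zero_norm (fun x => ?_) hb
    have hch := ch_pos (α := α) (β := β) (t := t) x
    have hexp := Real.exp_pos (β * (x + (3 * α ^ 2 - β ^ 2) * t))
    rw [Real.norm_eq_abs, abs_div, abs_of_pos hexp, abs_of_pos hch, div_le_iff₀ hch]
    nlinarith [one_le_ch (α := α) (β := β) (t := t) x]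
  simpa using h0.sub tendsto_const_nhds

lemma tendsto_GG_top (hα : 0 < α) (hβ : 0 < β) :
    Tendsto (GG α β t) atTop (𝓝 (4 * β)) := by
  have hch := tendsto_ch_top (α := α) (t := t) hβ
  have h := Tendsto.div
    (((tendsto_tanh_top (α := α) (t := t) hβ).const_mul (4 * β)).add
      ((tendsto_sncs hch).const_mul (4 * β ^ 2 / α)))
    (((tendsto_snsq hch).const_mul ((β / α) ^ 2)).const_add 1)
    (by norm_num)
  simp only [mul_one, mul_zero, add_zero] at h
  have he : (4 * β) / 1 = 4 * β := by norm_num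
  rw [he] at h
  exact h.congr fun x => (GG_eq hα x).symm

lemma tendsto_GG_bot (hα : 0 < α) (hβ : 0 < β) :
    Tendsto (GG α β t) atBot (𝓝 (-(4 * β))) := by
  have hch := tendsto_ch_bot (α := α) (t := t) hβ
  have h := Tendsto.div
    (((tendsto_tanh_bot (α := α) (t := t) hβ).const_mul (4 * β)).add
      ((tendsto_sncs hch).const_mul (4 * β ^ 2 / α)))
    (((tendsto_snsq hch).const_mul ((β / α) ^ 2)).const_add 1)
    (by norm_num)
  simp only [mul_zero, add_zero] at h
  have he : (4 * β * -1) / 1 = -(4 * β) := by ring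
  rw [he] at h
  exact h.congr fun x => (GG_eq hα x).symm

lemma integrable_BB_sq (hα : 0 < α) (hβ : 0 < β) :
    Integrable (fun x => BB α β t x ^ 2) := by
  have hIoi : IntegrableOn (fun x => BB α β t x ^ 2) (Ioi 0) :=
    integrableOn_Ioi_deriv_of_nonneg' (g := GG α β t) (fun x _ => hasDerivAt_GG hα x)
      (fun x _ => sq_nonneg _) (tendsto_GG_top hα hβ)
  have hrefl : IntegrableOn (fun x => BB α β t (-x) ^ 2) (Ioi 0) := by
    refine integrableOn_Ioi_deriv_of_nonneg' (g := fun y => -GG α β t (-y)) (l := 4 * β)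
      (fun x _ => ?_) (fun x _ => sq_nonneg _) ?_
    · have h := ((hasDerivAt_GG (β := β) (t := t) hα (-x)).comp x (hasDerivAt_neg x)).fun_neg
      simpa [Function.comp_def] using h
    · have h := ((tendsto_GG_bot (α := α) (β := β) (t := t) hα hβ).comp
        tendsto_neg_atTop_atBot).neg
      simpa [Function.comp] using h
  have hIio : IntegrableOn (fun x => BB α β t x ^ 2) (Iio 0) := by
    have hpre : (Neg.neg : ℝ → ℝ) ⁻¹' (Iio (0 : ℝ)) = Ioi 0 := by
      ext y; simp
    have hiff := MeasurePreserving.integrableOn_comp_preimage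
      (e := (Neg.neg : ℝ → ℝ)) (f := fun x : ℝ => BB α β t x ^ 2) (s := Iio (0 : ℝ))
      (Measure.measurePreserving_neg (volume : Measure ℝ))
      (Homeomorph.neg ℝ).measurableEmbedding
    rw [hpre] at hiff
    exact hiff.1 hrefl
  have hIic : IntegrableOn (fun x => BB α β t x ^ 2) (Iic 0) :=
    hIio.congr_set_ae Iio_ae_eq_Iic.symm
  have huniv := hIic.union hIoi
  rw [Set.Iic_union_Ioi] at huniv
  exact integrableOn_univ.1 huniv

end BreatherMassAux

theorem breather_mass (α β : ℝ) (hα : 0 < α) (hβ : 0 < β) (t : ℝ) :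
    (1 / 2) * ∫ x : ℝ, (breather α β t x) ^ 2 = 4 * β := by
  have h := MeasureTheory.integral_of_hasDerivAt_of_tendsto
    (f := BreatherMassAux.GG α β t) (f' := fun x => BreatherMassAux.BB α β t x ^ 2)
    (fun x => BreatherMassAux.hasDerivAt_GG hα x)
    (BreatherMassAux.integrable_BB_sq hα hβ)
    (BreatherMassAux.tendsto_GG_bot hα hβ)
    (BreatherMassAux.tendsto_GG_top hα hβ)
  have heq : ∫ x : ℝ, (breather α β t x) ^ 2 = ∫ x : ℝ, BreatherMassAux.BB α β t x ^ 2 := by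
    congr 1
    funext x
    rw [BreatherMassAux.breather_eq hα x]
  rw [heq, h]
  ring
end

section
/- Define f(x) = α² + β² + αβ sin(2αx) − β² cos(2αx) + α²(sinh(2βx) + cosh(2βx)) and g(x) = α² + β² + α² cosh(2βx) − β² cos(2αx), for α, β > 0. Then f'(x)g(x) − f(x)g'(x) = 2α²β · h(x), where h(x) = α² − β² + (α²+β²)(cos(2αx) + cosh(2βx)) + (α²−β²)cos(2αx)cosh(2βx) − 2αβ sin(2αx) sinh(2βx). -/
theorem wronskian_identity_mass (α β : ℝ) (hα : 0 < α) (hβ : 0 < β) (x : ℝ) :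
    deriv (fun x : ℝ => α ^ 2 + β ^ 2 + α * β * Real.sin (2 * α * x)
        - β ^ 2 * Real.cos (2 * α * x)
        + α ^ 2 * (Real.sinh (2 * β * x) + Real.cosh (2 * β * x))) x *
      (α ^ 2 + β ^ 2 + α ^ 2 * Real.cosh (2 * β * x) - β ^ 2 * Real.cos (2 * α * x))
    - (α ^ 2 + β ^ 2 + α * β * Real.sin (2 * α * x) - β ^ 2 * Real.cos (2 * α * x)
        + α ^ 2 * (Real.sinh (2 * β * x) + Real.cosh (2 * β * x))) *
      deriv (fun x : ℝ => α ^ 2 + β ^ 2 + α ^ 2 * Real.cosh (2 * β * x)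
        - β ^ 2 * Real.cos (2 * α * x)) x
    = 2 * α ^ 2 * β *
      (α ^ 2 - β ^ 2 + (α ^ 2 + β ^ 2) * (Real.cos (2 * α * x) + Real.cosh (2 * β * x))
        + (α ^ 2 - β ^ 2) * Real.cos (2 * α * x) * Real.cosh (2 * β * x)
        - 2 * α * β * Real.sin (2 * α * x) * Real.sinh (2 * β * x)) := by
  have hlin : ∀ c : ℝ, HasDerivAt (fun y : ℝ => c * y) c x := fun c => by
    simpa using (hasDerivAt_id x).const_mul c
  have hs : HasDerivAt (fun y : ℝ => Real.sin (2 * α * y))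
      (Real.cos (2 * α * x) * (2 * α)) x :=
    (Real.hasDerivAt_sin _).comp x (hlin (2 * α))
  have hc : HasDerivAt (fun y : ℝ => Real.cos (2 * α * y))
      (-Real.sin (2 * α * x) * (2 * α)) x :=
    (Real.hasDerivAt_cos _).comp x (hlin (2 * α))
  have hS : HasDerivAt (fun y : ℝ => Real.sinh (2 * β * y))
      (Real.cosh (2 * β * x) * (2 * β)) x :=
    (Real.hasDerivAt_sinh _).comp x (hlin (2 * β))
  have hC : HasDerivAt (fun y : ℝ => Real.cosh (2 * β * y))
      (Real.sinh (2 * β * x) * (2 * β)) x :=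
    (Real.hasDerivAt_cosh _).comp x (hlin (2 * β))
  have hf : HasDerivAt (fun y : ℝ => α ^ 2 + β ^ 2 + α * β * Real.sin (2 * α * y)
        - β ^ 2 * Real.cos (2 * α * y)
        + α ^ 2 * (Real.sinh (2 * β * y) + Real.cosh (2 * β * y)))
      (α * β * (Real.cos (2 * α * x) * (2 * α))
        - β ^ 2 * (-Real.sin (2 * α * x) * (2 * α))
        + α ^ 2 * (Real.cosh (2 * β * x) * (2 * β) + Real.sinh (2 * β * x) * (2 * β))) x := by
    simpa [Pi.add_def, Pi.sub_def] using
      ((((hasDerivAt_const x (α ^ 2 + β ^ 2)).add (hs.const_mul (α * β))).sub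
        (hc.const_mul (β ^ 2))).add ((hS.add hC).const_mul (α ^ 2)))
  have hg : HasDerivAt (fun y : ℝ => α ^ 2 + β ^ 2 + α ^ 2 * Real.cosh (2 * β * y)
        - β ^ 2 * Real.cos (2 * α * y))
      (α ^ 2 * (Real.sinh (2 * β * x) * (2 * β))
        - β ^ 2 * (-Real.sin (2 * α * x) * (2 * α))) x := by
    simpa [Pi.add_def, Pi.sub_def] using
      (((hasDerivAt_const x (α ^ 2 + β ^ 2)).add (hC.const_mul (α ^ 2))).sub
        (hc.const_mul (β ^ 2)))
  rw [hf.deriv, hg.deriv]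
  have h1 := Real.sin_sq_add_cos_sq (2 * α * x)
  have h2 := Real.cosh_sq_sub_sinh_sq (2 * β * x)
  linear_combination (-2 * α ^ 2 * β ^ 3) * h1 + 2 * α ^ 4 * β * h2
end

section
/- Let g(x) = α² + β² + α² cosh(2βy₂) − β² cos(2αy₁) and ĥ(x) = β² − (α²+β²)cos(2αy₁) − α² cos(2αy₁)cosh(2βy₂) + αβ sin(2αy₁)sinh(2βy₂), with y₁ = x+c₁, y₂ = x+c₂ linear shifts of x, α, β > 0. Then ∫_ℝ ĥ(x)/g(x)² dx = 0, since ĥ = −[g·((1/(2α))sin(2αy₁))' − ((1/(2α))sin(2αy₁))·g'], so ĥ/g² = −(sin(2αy₁)/(2α g))'. -/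
open Real MeasureTheory Filter

lemma quad_le_cosh' (s : ℝ) : 1 + s ^ 2 / 4 ≤ Real.cosh s := by
  have key : ∀ t : ℝ, 0 ≤ t → t ≤ Real.sinh t := by
    intro t ht
    rcases ht.eq_or_lt with h | h
    · simp [← h]
    · exact (Real.self_lt_sinh_iff.2 h).le
  have h2 : (s / 2) ^ 2 ≤ Real.sinh (s / 2) ^ 2 := by
    rcases le_total 0 s with h | h
    · have h1 := key (s / 2) (by linarith)
      nlinarith
    · have h1 := key (-(s / 2)) (by linarith)
      rw [Real.sinh_neg] at h1
      nlinarith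
  have h3 : Real.cosh s = Real.cosh (s / 2) ^ 2 + Real.sinh (s / 2) ^ 2 := by
    rw [← Real.cosh_two_mul]; ring_nf
  nlinarith [Real.one_le_cosh (s / 2)]

lemma shift_int' (c₂ : ℝ) (f : ℝ → ℝ) (hf : Integrable f) :
    Integrable (fun x => f (x + c₂)) :=
  (MeasureTheory.measurePreserving_add_right volume c₂).integrable_comp_emb
    (measurableEmbedding_addRight c₂) |>.mpr hf

lemma quot_eq' (α β S C SH CH : ℝ) (hα : α ≠ 0)
    (hG : α ^ 2 + β ^ 2 + α ^ 2 * CH - β ^ 2 * C ≠ 0)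
    (pyth : S ^ 2 + C ^ 2 = 1) :
    -((C * (2 * α) * (2 * α * (α ^ 2 + β ^ 2 + α ^ 2 * CH - β ^ 2 * C)) -
        S * (2 * α * (α ^ 2 * (SH * (2 * β)) - β ^ 2 * (-S * (2 * α))))) /
      (2 * α * (α ^ 2 + β ^ 2 + α ^ 2 * CH - β ^ 2 * C)) ^ 2)
      = (β ^ 2 - (α ^ 2 + β ^ 2) * C - α ^ 2 * C * CH + α * β * S * SH) /
        (α ^ 2 + β ^ 2 + α ^ 2 * CH - β ^ 2 * C) ^ 2 := by
  rw [neg_div', div_eq_div_iff (by positivity) (by positivity)]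
  linear_combination (4 * α ^ 2 * β ^ 2 * (α ^ 2 + β ^ 2 + α ^ 2 * CH - β ^ 2 * C) ^ 2) * pyth

lemma aux1 (A P g : ℝ) (hA : A ≠ 0) :
    1 / (2 * A ^ 3) * (1 + P)⁻¹ * (2 * A * g) = (g / A ^ 2) / (1 + P) := by
  rcases eq_or_ne (1 + P) 0 with h | h
  · simp [h]
  · field_simp

lemma abs_sinh_le_cosh' (v : ℝ) : |Real.sinh v| ≤ Real.cosh v := by
  rw [abs_le, Real.sinh_eq, Real.cosh_eq]
  constructor <;> nlinarith [Real.exp_pos v, Real.exp_pos (-v)]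

set_option maxHeartbeats 1000000 in
theorem hat_h_integral_zero (α β c₁ c₂ : ℝ) (hα : 0 < α) (hβ : 0 < β) :
    (∫ x : ℝ,
      (β ^ 2 - (α ^ 2 + β ^ 2) * Real.cos (2 * α * (x + c₁))
        - α ^ 2 * Real.cos (2 * α * (x + c₁)) * Real.cosh (2 * β * (x + c₂))
        + α * β * Real.sin (2 * α * (x + c₁)) * Real.sinh (2 * β * (x + c₂))) /
      (α ^ 2 + β ^ 2 + α ^ 2 * Real.cosh (2 * β * (x + c₂))
        - β ^ 2 * Real.cos (2 * α * (x + c₁))) ^ 2) = 0 := by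
  set G : ℝ → ℝ := fun x => α ^ 2 + β ^ 2 + α ^ 2 * Real.cosh (2 * β * (x + c₂))
      - β ^ 2 * Real.cos (2 * α * (x + c₁)) with hGdef
  set f' : ℝ → ℝ := fun x =>
      (β ^ 2 - (α ^ 2 + β ^ 2) * Real.cos (2 * α * (x + c₁))
        - α ^ 2 * Real.cos (2 * α * (x + c₁)) * Real.cosh (2 * β * (x + c₂))
        + α * β * Real.sin (2 * α * (x + c₁)) * Real.sinh (2 * β * (x + c₂))) / G x ^ 2
    with hf'def
  set F : ℝ → ℝ := fun x => -(Real.sin (2 * α * (x + c₁)) / (2 * α * G x)) with hFdef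
  have hGpos : ∀ y : ℝ, 0 < G y := by
    intro y
    simp only [hGdef]
    nlinarith [Real.one_le_cosh (2 * β * (y + c₂)), Real.cos_le_one (2 * α * (y + c₁))]
  -- lower bounds for G
  have hGlow1 : ∀ y : ℝ, α ^ 2 * (1 + Real.cosh (2 * β * (y + c₂))) ≤ G y := by
    intro y
    simp only [hGdef]
    nlinarith [Real.cos_le_one (2 * α * (y + c₁))]
  have hGlow2 : ∀ y : ℝ, α ^ 2 * (1 + (β * (y + c₂)) ^ 2) ≤ G y := by
    intro y
    have h1 := quad_le_cosh' (2 * β * (y + c₂))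
    have h2 := hGlow1 y
    nlinarith [sq_nonneg α]
  -- derivative
  have hderiv : ∀ x : ℝ, HasDerivAt F (f' x) x := by
    intro x
    have hu : HasDerivAt (fun x : ℝ => 2 * α * (x + c₁)) (2 * α) x := by
      simpa using ((hasDerivAt_id x).add_const c₁).const_mul (2 * α)
    have hv : HasDerivAt (fun x : ℝ => 2 * β * (x + c₂)) (2 * β) x := by
      simpa using ((hasDerivAt_id x).add_const c₂).const_mul (2 * β)
    have hs : HasDerivAt (fun x : ℝ => Real.sin (2 * α * (x + c₁)))
        (Real.cos (2 * α * (x + c₁)) * (2 * α)) x := (Real.hasDerivAt_sin _).comp x hu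
    have hcos : HasDerivAt (fun x : ℝ => Real.cos (2 * α * (x + c₁)))
        (-Real.sin (2 * α * (x + c₁)) * (2 * α)) x := (Real.hasDerivAt_cos _).comp x hu
    have hch : HasDerivAt (fun x : ℝ => Real.cosh (2 * β * (x + c₂)))
        (Real.sinh (2 * β * (x + c₂)) * (2 * β)) x := (Real.hasDerivAt_cosh _).comp x hv
    have hG : HasDerivAt G
        (α ^ 2 * (Real.sinh (2 * β * (x + c₂)) * (2 * β))
          - β ^ 2 * (-Real.sin (2 * α * (x + c₁)) * (2 * α))) x :=
      ((hch.const_mul (α ^ 2)).const_add _).sub (hcos.const_mul (β ^ 2))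
    have hd : HasDerivAt (fun x : ℝ => 2 * α * G x)
        (2 * α * (α ^ 2 * (Real.sinh (2 * β * (x + c₂)) * (2 * β))
          - β ^ 2 * (-Real.sin (2 * α * (x + c₁)) * (2 * α)))) x := hG.const_mul _
    have hne : 2 * α * G x ≠ 0 := ne_of_gt (mul_pos (by positivity) (hGpos x))
    have := (hs.div hd hne).neg
    refine this.congr_deriv (Eq.symm ?_)
    exact (quot_eq' α β (Real.sin (2 * α * (x + c₁))) (Real.cos (2 * α * (x + c₁)))
      (Real.sinh (2 * β * (x + c₂))) (Real.cosh (2 * β * (x + c₂))) hα.ne' (hGpos x).ne'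
      (Real.sin_sq_add_cos_sq _)).symm
  -- integrable dominating function
  have hψ : Integrable (fun x : ℝ => (1 + (β * (x + c₂)) ^ 2)⁻¹) := by
    have hψ1 : Integrable (fun x : ℝ => (1 + (β * x) ^ 2)⁻¹) :=
      integrable_inv_one_add_sq.comp_mul_left' hβ.ne'
    exact shift_int' c₂ _ hψ1
  -- continuity
  have hGcont : Continuous G := by
    simp only [hGdef]; fun_prop
  have hf'cont : Continuous f' := by
    simp only [hf'def]
    exact Continuous.div (by fun_prop) (hGcont.pow 2)
      (fun x => pow_ne_zero _ (hGpos x).ne')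
  have hFcont : Continuous F := by
    simp only [hFdef]
    exact (Continuous.div (by fun_prop) (continuous_const.mul hGcont)
      (fun x => ne_of_gt (mul_pos (by positivity) (hGpos x)))).neg
  -- integrability of f'
  set K : ℝ := α ^ 2 + 2 * β ^ 2 + α * β with hKdef
  have hInt' : Integrable f' := by
    refine (hψ.const_mul (K / α ^ 4)).mono' hf'cont.aestronglyMeasurable
      (ae_of_all _ fun x => ?_)
    set C := Real.cos (2 * α * (x + c₁))
    set S := Real.sin (2 * α * (x + c₁))
    set CH := Real.cosh (2 * β * (x + c₂))
    set SH := Real.sinh (2 * β * (x + c₂))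
    set P := (β * (x + c₂)) ^ 2 with hPdef
    have hCHpos : 1 ≤ CH := Real.one_le_cosh _
    have hC1 : |C| ≤ 1 := Real.abs_cos_le_one _
    have hS1 : |S| ≤ 1 := Real.abs_sin_le_one _
    have hSH : |SH| ≤ CH := abs_sinh_le_cosh' _
    have hPnn : 0 ≤ P := sq_nonneg _
    have hKpos : 0 < K := by positivity
    have hC1' : -1 ≤ C := Real.neg_one_le_cos _
    have hC2' : C ≤ 1 := Real.cos_le_one _
    have hSSH : |S * SH| ≤ CH := by
      rw [abs_mul]
      calc |S| * |SH| ≤ 1 * CH := mul_le_mul hS1 hSH (abs_nonneg _) zero_le_one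
        _ = CH := one_mul _
    have hSSH' := abs_le.1 hSSH
    have hCHnn : (0:ℝ) ≤ CH := le_trans zero_le_one hCHpos
    have q1 : (0:ℝ) ≤ (α ^ 2 + β ^ 2) * (1 + C) := mul_nonneg (by positivity) (by linarith)
    have q2 : (0:ℝ) ≤ (α ^ 2 + β ^ 2) * (1 - C) := mul_nonneg (by positivity) (by linarith)
    have q3 : (0:ℝ) ≤ α ^ 2 * ((1 + C) * CH) :=
      mul_nonneg (by positivity) (mul_nonneg (by linarith) hCHnn)
    have q4 : (0:ℝ) ≤ α ^ 2 * ((1 - C) * CH) :=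
      mul_nonneg (by positivity) (mul_nonneg (by linarith) hCHnn)
    have q5 : (0:ℝ) ≤ α * β * (CH - S * SH) := mul_nonneg (by positivity) (by linarith [hSSH'.2])
    have q6 : (0:ℝ) ≤ α * β * (CH + S * SH) := mul_nonneg (by positivity) (by linarith [hSSH'.1])
    have q7 : (0:ℝ) ≤ β ^ 2 * CH := mul_nonneg (by positivity) hCHnn
    have hnum : |β ^ 2 - (α ^ 2 + β ^ 2) * C - α ^ 2 * C * CH + α * β * S * SH|
        ≤ K * (1 + CH) := by
      rw [abs_le, hKdef]
      constructor <;> nlinarith [q1, q2, q3, q4, q5, q6, q7, mul_pos hα hβ, sq_nonneg β]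
    have hG1 : α ^ 2 * (1 + CH) ≤ G x := hGlow1 x
    have hG2 : α ^ 2 * (1 + P) ≤ G x := hGlow2 x
    have hGx := hGpos x
    have hGG : (α ^ 2 * (1 + CH)) * (α ^ 2 * (1 + P)) ≤ G x * G x :=
      mul_le_mul hG1 hG2 (by positivity) hGx.le
    have key : |β ^ 2 - (α ^ 2 + β ^ 2) * C - α ^ 2 * C * CH + α * β * S * SH| * (1 + P)
        ≤ (K / α ^ 4) * G x ^ 2 := by
      have e1 : (K / α ^ 4) * ((α ^ 2 * (1 + CH)) * (α ^ 2 * (1 + P)))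
          = K * (1 + CH) * (1 + P) := by
        field_simp
      calc |β ^ 2 - (α ^ 2 + β ^ 2) * C - α ^ 2 * C * CH + α * β * S * SH| * (1 + P)
          ≤ K * (1 + CH) * (1 + P) := by
            apply mul_le_mul_of_nonneg_right hnum (by linarith)
        _ = (K / α ^ 4) * ((α ^ 2 * (1 + CH)) * (α ^ 2 * (1 + P))) := e1.symm
        _ ≤ (K / α ^ 4) * (G x * G x) := by
            apply mul_le_mul_of_nonneg_left hGG (by positivity)
        _ = (K / α ^ 4) * G x ^ 2 := by ring
    have : ‖f' x‖ = |β ^ 2 - (α ^ 2 + β ^ 2) * C - α ^ 2 * C * CH + α * β * S * SH| / G x ^ 2 := by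
      rw [hf'def, Real.norm_eq_abs, abs_div, abs_of_pos (by positivity : (0:ℝ) < G x ^ 2)]
    rw [this, div_le_iff₀ (by positivity : (0:ℝ) < G x ^ 2)]
    have hPinv : (K / α ^ 4) * (1 + P)⁻¹ * G x ^ 2 = ((K / α ^ 4) * G x ^ 2) / (1 + P) := by
      rw [div_eq_mul_inv ((K / α ^ 4) * G x ^ 2) (1 + P)]; ring
    rw [hPinv, le_div_iff₀ (by linarith : (0:ℝ) < 1 + P)]
    linarith [key]
  -- integrability of F
  have hIntF : Integrable F := by
    refine (hψ.const_mul (1 / (2 * α ^ 3))).mono' hFcont.aestronglyMeasurable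
      (ae_of_all _ fun x => ?_)
    set S := Real.sin (2 * α * (x + c₁))
    set P := (β * (x + c₂)) ^ 2 with hPdef
    have hS1 : |S| ≤ 1 := Real.abs_sin_le_one _
    have hPnn : 0 ≤ P := sq_nonneg _
    have hG2 : α ^ 2 * (1 + P) ≤ G x := hGlow2 x
    have hGx := hGpos x
    have : ‖F x‖ = |S| / (2 * α * G x) := by
      rw [hFdef, Real.norm_eq_abs, abs_neg, abs_div,
        abs_of_pos (mul_pos (by positivity) hGx : (0:ℝ) < 2 * α * G x)]
    rw [this, div_le_iff₀ (mul_pos (by positivity) hGx : (0:ℝ) < 2 * α * G x)]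
    have hPinv : 1 / (2 * α ^ 3) * (1 + P)⁻¹ * (2 * α * G x)
        = (G x / α ^ 2) / (1 + P) := aux1 α P (G x) hα.ne'
    rw [hPinv, le_div_iff₀ (by linarith : (0:ℝ) < 1 + P)]
    have h1 : |S| * (1 + P) ≤ 1 + P := by
      nlinarith [abs_nonneg S]
    have h2 : 1 + P ≤ G x / α ^ 2 := by
      rw [le_div_iff₀ (by positivity : (0:ℝ) < α ^ 2)]
      nlinarith
    linarith
  exact MeasureTheory.integral_eq_zero_of_hasDerivAt_of_integrable hderiv hInt' hIntF
end

section
/- Let α, β > 0 and define k₃(x) = 8α³β³[β sin(2αy₁) − α sinh(2βy₂)] and g(x) = α²+β²+α² cosh(2βy₂) − β² cos(2αy₁), where y₁ = x+c₁, y₂ = x+c₂ are shifts. Then k₃'·g − 2k₃·g' = 16α⁴β⁴[cos(2αy₁) − cosh(2βy₂)]·g − 2k₃·g', and more precisely (k₃/g²)' = 16α⁴β⁴ k₂ / g³ where k₂ = α² sinh²(2βy₂) − β² sin²(2αy₁) − (α²+β²)(1 + cosh(2βy₂) − cos(2αy₁) − cos(2αy₁)cosh(2βy₂)). -/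
theorem wronskian_quotient_identity (α β c₁ c₂ : ℝ) (hα : 0 < α) (hβ : 0 < β) (x : ℝ) :
    (deriv (fun x : ℝ => 8 * α ^ 3 * β ^ 3 *
          (β * Real.sin (2 * α * (x + c₁)) - α * Real.sinh (2 * β * (x + c₂)))) x *
        (α ^ 2 + β ^ 2 + α ^ 2 * Real.cosh (2 * β * (x + c₂))
          - β ^ 2 * Real.cos (2 * α * (x + c₁)))
      - 2 * (8 * α ^ 3 * β ^ 3 *
          (β * Real.sin (2 * α * (x + c₁)) - α * Real.sinh (2 * β * (x + c₂)))) *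
        deriv (fun x : ℝ => α ^ 2 + β ^ 2 + α ^ 2 * Real.cosh (2 * β * (x + c₂))
          - β ^ 2 * Real.cos (2 * α * (x + c₁))) x
      = 16 * α ^ 4 * β ^ 4 *
          (Real.cos (2 * α * (x + c₁)) - Real.cosh (2 * β * (x + c₂))) *
        (α ^ 2 + β ^ 2 + α ^ 2 * Real.cosh (2 * β * (x + c₂))
          - β ^ 2 * Real.cos (2 * α * (x + c₁)))
      - 2 * (8 * α ^ 3 * β ^ 3 *
          (β * Real.sin (2 * α * (x + c₁)) - α * Real.sinh (2 * β * (x + c₂)))) *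
        deriv (fun x : ℝ => α ^ 2 + β ^ 2 + α ^ 2 * Real.cosh (2 * β * (x + c₂))
          - β ^ 2 * Real.cos (2 * α * (x + c₁))) x) ∧
    deriv (fun x : ℝ =>
        8 * α ^ 3 * β ^ 3 *
          (β * Real.sin (2 * α * (x + c₁)) - α * Real.sinh (2 * β * (x + c₂))) /
        (α ^ 2 + β ^ 2 + α ^ 2 * Real.cosh (2 * β * (x + c₂))
          - β ^ 2 * Real.cos (2 * α * (x + c₁))) ^ 2) x
      = 16 * α ^ 4 * β ^ 4 *
          (α ^ 2 * Real.sinh (2 * β * (x + c₂)) ^ 2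
            - β ^ 2 * Real.sin (2 * α * (x + c₁)) ^ 2
            - (α ^ 2 + β ^ 2) * (1 + Real.cosh (2 * β * (x + c₂))
                - Real.cos (2 * α * (x + c₁))
                - Real.cos (2 * α * (x + c₁)) * Real.cosh (2 * β * (x + c₂)))) /
        (α ^ 2 + β ^ 2 + α ^ 2 * Real.cosh (2 * β * (x + c₂))
          - β ^ 2 * Real.cos (2 * α * (x + c₁))) ^ 3 := by
  set s := Real.sin (2 * α * (x + c₁)) with hs
  set c := Real.cos (2 * α * (x + c₁)) with hc
  set S := Real.sinh (2 * β * (x + c₂)) with hS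
  set C := Real.cosh (2 * β * (x + c₂)) with hC
  have h1 : HasDerivAt (fun x : ℝ => 2 * α * (x + c₁)) (2 * α) x := by
    simpa using ((hasDerivAt_id x).add_const c₁).const_mul (2 * α)
  have h2 : HasDerivAt (fun x : ℝ => 2 * β * (x + c₂)) (2 * β) x := by
    simpa using ((hasDerivAt_id x).add_const c₂).const_mul (2 * β)
  have hsin : HasDerivAt (fun x : ℝ => Real.sin (2 * α * (x + c₁))) (c * (2 * α)) x :=
    (Real.hasDerivAt_sin _).comp x h1
  have hcos : HasDerivAt (fun x : ℝ => Real.cos (2 * α * (x + c₁))) (-s * (2 * α)) x :=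
    (Real.hasDerivAt_cos _).comp x h1
  have hsinh : HasDerivAt (fun x : ℝ => Real.sinh (2 * β * (x + c₂))) (C * (2 * β)) x :=
    (Real.hasDerivAt_sinh _).comp x h2
  have hcosh : HasDerivAt (fun x : ℝ => Real.cosh (2 * β * (x + c₂))) (S * (2 * β)) x :=
    (Real.hasDerivAt_cosh _).comp x h2
  have hk : HasDerivAt (fun x : ℝ => 8 * α ^ 3 * β ^ 3 *
      (β * Real.sin (2 * α * (x + c₁)) - α * Real.sinh (2 * β * (x + c₂))))
      (8 * α ^ 3 * β ^ 3 * (β * (c * (2 * α)) - α * (C * (2 * β)))) x :=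
    (((hsin.const_mul β).sub (hsinh.const_mul α)).const_mul _)
  have hg : HasDerivAt (fun x : ℝ => α ^ 2 + β ^ 2 + α ^ 2 * Real.cosh (2 * β * (x + c₂))
      - β ^ 2 * Real.cos (2 * α * (x + c₁)))
      (α ^ 2 * (S * (2 * β)) - β ^ 2 * (-s * (2 * α))) x :=
    (((hcosh.const_mul (α ^ 2)).const_add (α ^ 2 + β ^ 2)).sub (hcos.const_mul (β ^ 2)))
  have hgpos : 0 < α ^ 2 + β ^ 2 + α ^ 2 * C - β ^ 2 * c := by
    have h3 : 1 ≤ C := Real.one_le_cosh _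
    have h4 : c ≤ 1 := Real.cos_le_one _
    nlinarith [sq_nonneg α, sq_nonneg β, hα.le, hβ.le]
  have hgne : (α ^ 2 + β ^ 2 + α ^ 2 * C - β ^ 2 * c) ≠ 0 := ne_of_gt hgpos
  have hpyth : s ^ 2 + c ^ 2 = 1 := Real.sin_sq_add_cos_sq _
  have hpyth2 : C ^ 2 - S ^ 2 = 1 := Real.cosh_sq_sub_sinh_sq _
  have hg2 : HasDerivAt (fun x : ℝ => (α ^ 2 + β ^ 2 + α ^ 2 * Real.cosh (2 * β * (x + c₂))
      - β ^ 2 * Real.cos (2 * α * (x + c₁))) ^ 2)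
      (2 * (α ^ 2 + β ^ 2 + α ^ 2 * C - β ^ 2 * c) ^ 1 *
        (α ^ 2 * (S * (2 * β)) - β ^ 2 * (-s * (2 * α)))) x := by
    simpa using hg.fun_pow 2
  have hq := hk.fun_div hg2 (pow_ne_zero 2 hgne)
  have hkey : 8 * α ^ 3 * β ^ 3 * (β * (c * (2 * α)) - α * (C * (2 * β))) *
        (α ^ 2 + β ^ 2 + α ^ 2 * C - β ^ 2 * c)
      - 2 * (8 * α ^ 3 * β ^ 3 * (β * s - α * S)) *
        (α ^ 2 * (S * (2 * β)) - β ^ 2 * (-s * (2 * α)))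
      = 16 * α ^ 4 * β ^ 4 *
          (α ^ 2 * S ^ 2 - β ^ 2 * s ^ 2
            - (α ^ 2 + β ^ 2) * (1 + C - c - c * C)) := by
    linear_combination (-(16 * α ^ 4 * β ^ 6)) * hpyth + (-(16 * α ^ 6 * β ^ 4)) * hpyth2
  constructor
  · rw [hk.deriv, hg.deriv]
    ring
  · rw [hq.deriv]
    rw [div_eq_div_iff (by positivity) (by positivity)]
    linear_combination (α ^ 2 + β ^ 2 + α ^ 2 * C - β ^ 2 * c) ^ 4 * hkey
end
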